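/- Let h : [0,∞) → ℝ be twice continuously differentiable with h(0) = 0, h'(0) < 0, attaining its global minimum at some t* > 0, and suppose h'' is increasing on [0, t*]. Then for all t ∈ [0, t*], h(t) ≤ t·h'(0)/2. -/

import Mathlib

theorem stmt_17 (h : ℝ → ℝ) (tstar : ℝ)
    (hsmooth : ContDiffOn ℝ 2 h (Set.Ici 0))
    (h0 : h 0 = 0) (h0' : deriv h 0 < 0) (htpos : 0 < tstar)
    (hmin : ∀ t : ℝ, 0 ≤ t → h tstar ≤ h t)
    (hmono : MonotoneOn (deriv (deriv h)) (Set.Icc 0 tstar)) :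
    ∀ t ∈ Set.Icc (0:ℝ) tstar, h t ≤ t * deriv h 0 / 2 := by
  have hU : UniqueDiffOn ℝ (Set.Ici (0:ℝ)) := uniqueDiffOn_Ici 0
  set g := derivWithin h (Set.Ici (0:ℝ)) with hgdef
  have hg : ContDiffOn ℝ 1 g (Set.Ici 0) := hsmooth.derivWithin hU (by norm_num)
  have hdiff : DifferentiableOn ℝ h (Set.Ici 0) := hsmooth.differentiableOn (by norm_num)
  have hdat : ∀ x : ℝ, 0 < x → DifferentiableAt ℝ h x := fun x hx =>
    (hdiff x (le_of_lt hx)).differentiableAt (Ici_mem_nhds hx)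
  have hd0 : DifferentiableAt ℝ h 0 := by
    by_contra hc
    rw [deriv_zero_of_not_differentiableAt hc] at h0'
    exact lt_irrefl 0 h0'
  have heq : Set.EqOn (deriv h) g (Set.Ici 0) := by
    intro x hx
    rcases eq_or_lt_of_le (Set.mem_Ici.mp hx) with rfl | hx'
    · exact (hd0.hasDerivAt.hasDerivWithinAt.derivWithin (hU 0 (by simp))).symm
    · exact (derivWithin_of_mem_nhds (Ici_mem_nhds hx')).symm
  have hloc : IsLocalMin h tstar := by
    filter_upwards [Ici_mem_nhds htpos] with x hx using hmin x hx
  have hdts : deriv h tstar = 0 := hloc.deriv_eq_zero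
  have hcont : ContinuousOn (deriv h) (Set.Icc 0 tstar) :=
    (hg.continuousOn.mono (Set.Icc_subset_Ici_self)).congr
      (fun x hx => heq (Set.mem_Ici.mpr hx.1))
  have hgdiff : DifferentiableOn ℝ g (Set.Ici 0) := hg.differentiableOn one_ne_zero
  have hderiv_diff : ∀ x ∈ Set.Ioo (0:ℝ) tstar, DifferentiableAt ℝ (deriv h) x := by
    intro x hx
    have hgx : DifferentiableAt ℝ g x :=
      (hgdiff x (le_of_lt hx.1)).differentiableAt (Ici_mem_nhds hx.1)
    apply hgx.congr_of_eventuallyEq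
    filter_upwards [Ioi_mem_nhds hx.1] with y hy using heq (Set.mem_Ici.mpr (le_of_lt hy))
  have hconv : ConvexOn ℝ (Set.Icc 0 tstar) (deriv h) := by
    apply MonotoneOn.convexOn_of_deriv (convex_Icc 0 tstar) hcont
    · rw [interior_Icc]
      exact fun x hx => (hderiv_diff x hx).differentiableWithinAt
    · rw [interior_Icc]
      exact hmono.mono Set.Ioo_subset_Icc_self
  have hkey : ∀ x ∈ Set.Icc (0:ℝ) tstar, deriv h x ≤ (1 - x/tstar) * deriv h 0 := by
    intro x hx
    have ha : 0 ≤ 1 - x/tstar := by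
      rw [sub_nonneg, div_le_one htpos]; exact hx.2
    have hb : 0 ≤ x/tstar := div_nonneg hx.1 (le_of_lt htpos)
    have hab : (1 - x/tstar) + x/tstar = 1 := by ring
    have hin := hconv.2 (Set.left_mem_Icc.mpr (le_of_lt htpos))
      (Set.right_mem_Icc.mpr (le_of_lt htpos)) ha hb hab
    simp only [smul_eq_mul, mul_zero, zero_add, hdts, add_zero] at hin
    rwa [div_mul_cancel₀ x (ne_of_gt htpos)] at hin
  set c := deriv h 0 with hc
  have hφderiv : ∀ x ∈ Set.Ioo (0:ℝ) tstar,
      HasDerivAt (fun t => h t - c * (t - t^2/(2*tstar)))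
        (deriv h x - c * (1 - 2*x/(2*tstar))) x := by
    intro x hx
    have h1 : HasDerivAt h (deriv h x) x := (hdat x hx.1).hasDerivAt
    have h2 : HasDerivAt (fun t : ℝ => t - t^2/(2*tstar)) (1 - 2*x/(2*tstar)) x := by
      have := (hasDerivAt_id' x).sub ((hasDerivAt_pow 2 x).div_const (2*tstar))
      simpa [Pi.sub_def] using this
    exact h1.sub (h2.const_mul c)
  have hanti : AntitoneOn (fun t => h t - c * (t - t^2/(2*tstar))) (Set.Icc 0 tstar) := by
    apply antitoneOn_of_deriv_nonpos (convex_Icc 0 tstar)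
    · exact (hsmooth.continuousOn.mono Set.Icc_subset_Ici_self).sub
        ((continuous_const.mul (continuous_id.sub
          ((continuous_pow 2).div_const (2*tstar)))).continuousOn)
    · rw [interior_Icc]
      exact fun x hx => ((hφderiv x hx).differentiableAt).differentiableWithinAt
    · rw [interior_Icc]
      intro x hx
      rw [(hφderiv x hx).deriv]
      have hk := hkey x (Set.mem_Icc_of_Ioo hx)
      have hxx : 2*x/(2*tstar) = x/tstar := by
        field_simp
      rw [hxx]
      nlinarith [hk]
  intro t ht
  have h1 := hanti (Set.left_mem_Icc.mpr (le_of_lt htpos)) ht ht.1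
  simp only [h0] at h1
  have h2 : h t ≤ c * (t - t^2/(2*tstar)) := by
    have hz : (0:ℝ) - c * (0 - 0^2/(2*tstar)) = 0 := by norm_num
    rw [hz] at h1
    linarith
  have hfe : t - t^2/(2*tstar) - t/2 = t*(tstar - t)/(2*tstar) := by
    field_simp; ring
  have hnn : 0 ≤ t*(tstar - t)/(2*tstar) :=
    div_nonneg (mul_nonneg ht.1 (sub_nonneg.mpr ht.2)) (by linarith)
  have hmn : 0 ≤ (-c) * (t*(tstar - t)/(2*tstar)) :=
    mul_nonneg (neg_nonneg.mpr h0'.le) hnn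
  have hre : c * (t - t^2/(2*tstar)) - t*c/2 = c * (t*(tstar - t)/(2*tstar)) := by
    rw [← hfe]; ring
  nlinarith [h2, hmn, hre]
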